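/- Let G, G', G'', G''' be groups and j : G → G', j' : G' → G'', j'' : G'' → G''' group isomorphisms. The transitive products are associative: for all (α,β) ∈ G''' × G'', (γ,δ) ∈ G'' × G', (μ,ν) ∈ G' × G, one has m_{j'',(j''∘j')}( m_{j'',j'}((α,β),(γ,δ)), (μ,ν) ) = m_{j'',(j'∘j)}( (α,β), m_{j',j}((γ,δ),(μ,ν)) ), and both sides equal the explicit expression ( α · j''(γ) · (j''∘j')(μ), ν · j⁻¹( μ⁻¹ · δ · j'⁻¹(γ⁻¹βγ) · μ ) ). (In m_{j'',(j''∘j')} the first isomorphism governs the upper components and the second governs the lower components, i.e. m_{u,l}((p,q),(r,s)) = (p·u(r), s·l⁻¹(r⁻¹qr)).) -/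
import Mathlib


/-- The transitive product `m_{u,l} : (H''×H') × (H'×H) → H''×H` associated to a
lower fusion map `l : H → H'` and an upper fusion map `u : H' → H''`:
`m_{u,l}((α,β),(γ,δ)) = (α·u(γ), δ·l⁻¹(γ⁻¹βγ))`. -/
def transMul {H H' H'' : Type*} [Group H] [Group H'] [Group H'']
    (u : H' ≃* H'') (l : H ≃* H') (x : H'' × H') (y : H' × H) : H'' × H :=
  (x.1 * u y.1, y.2 * l.symm (y.1⁻¹ * x.2 * y.1))

/-- Associativity of the transitive products, with both sides equal to the explicit
expression `(α·j''(γ)·(j''∘j')(μ), ν·j⁻¹(μ⁻¹·δ·j'⁻¹(γ⁻¹βγ)·μ))`. -/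
theorem transMul_assoc {G G' G'' G''' : Type*}
    [Group G] [Group G'] [Group G''] [Group G''']
    (j : G ≃* G') (j' : G' ≃* G'') (j'' : G'' ≃* G''')
    (α : G''') (β : G'') (γ : G'') (δ : G') (μ : G') (ν : G) :
    transMul (j'.trans j'') j (transMul j'' j' (α, β) (γ, δ)) (μ, ν)
      = transMul j'' (j.trans j') (α, β) (transMul j' j (γ, δ) (μ, ν)) ∧
    transMul (j'.trans j'') j (transMul j'' j' (α, β) (γ, δ)) (μ, ν)
      = (α * j'' γ * (j'.trans j'') μ,
         ν * j.symm (μ⁻¹ * (δ * j'.symm (γ⁻¹ * β * γ)) * μ)) := by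
  constructor <;>
  · simp [transMul, Prod.ext_iff, map_mul, mul_assoc]
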